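/- Let C > 0, a > 0, b > 0 be real constants and define g(α) = (1−e^{−2α})/(2α) − ((1−e^{−α})/α)² for α > 0. Define G(N) = 2 − C·N²·ln(1 + b·g(a·N)) for N > 0. Then G is continuous on (0,∞), G(N) → 2 as N → 0⁺, and G(N) → −∞ as N → +∞. Consequently there exists N_crit > 0 with G(N_crit) = 0. -/

import Mathlib

open Filter

/-- The paper's signal-variance function for exponential decay observed over a window of
dimensionless length `α`. -/
noncomputable def g (α : ℝ) : ℝ :=
  (1 - Real.exp (-2 * α)) / (2 * α) - ((1 - Real.exp (-α)) / α) ^ 2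

lemma sinh_le_mul_cosh {t : ℝ} (ht : 0 ≤ t) : Real.sinh t ≤ t * Real.cosh t := by
  have hmono : MonotoneOn (fun s : ℝ => s * Real.cosh s - Real.sinh s) (Set.Ici 0) := by
    apply monotoneOn_of_deriv_nonneg (convex_Ici 0)
    · exact ((continuous_id.mul Real.continuous_cosh).sub Real.continuous_sinh).continuousOn
    · intro x _
      exact ((differentiable_id.mul Real.differentiable_cosh).sub Real.differentiable_sinh).differentiableAt.differentiableWithinAt
    · intro x hx
      rw [interior_Ici] at hx
      have hd : HasDerivAt (fun s : ℝ => s * Real.cosh s - Real.sinh s)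
          (1 * Real.cosh x + x * Real.sinh x - Real.cosh x) x :=
        ((hasDerivAt_id x).mul (Real.hasDerivAt_cosh x)).sub (Real.hasDerivAt_sinh x)
      rw [hd.deriv]
      have h1 := Real.sinh_nonneg_iff.mpr (le_of_lt (Set.mem_Ioi.mp hx))
      nlinarith [mul_nonneg (le_of_lt (Set.mem_Ioi.mp hx)) h1]
  have h0 : (fun s : ℝ => s * Real.cosh s - Real.sinh s) 0 ≤ (fun s : ℝ => s * Real.cosh s - Real.sinh s) t :=
    hmono (Set.self_mem_Ici) ht ht
  simp at h0
  linarith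

-- key inequality: 2(1 - e^{-α}) ≤ α(1 + e^{-α}) for α ≥ 0
lemma key_ineq {α : ℝ} (hα : 0 ≤ α) : 2 * (1 - Real.exp (-α)) ≤ α * (1 + Real.exp (-α)) := by
  have t := α / 2
  have h := sinh_le_mul_cosh (t := α / 2) (by linarith)
  rw [Real.sinh_eq, Real.cosh_eq] at h
  have he : Real.exp (-(α/2)) * Real.exp (α/2) = 1 := by
    rw [← Real.exp_add]; simp
  have he2 : Real.exp (-(α/2)) * Real.exp (-(α/2)) = Real.exp (-α) := by
    rw [← Real.exp_add]; ring_nf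
  have hp : 0 < Real.exp (-(α/2)) := Real.exp_pos _
  nlinarith [h, mul_le_mul_of_nonneg_left h (le_of_lt hp)]

lemma g_id {α : ℝ} (hα : 0 < α) :
    g α = ((1 - Real.exp (-α)) * (α * (1 + Real.exp (-α)) - 2 * (1 - Real.exp (-α)))) / (2 * α ^ 2) := by
  have h2 : Real.exp (-2 * α) = Real.exp (-α) ^ 2 := by
    rw [← Real.exp_nat_mul]; ring_nf
  unfold g
  rw [h2]
  field_simp
  ring

lemma exp_neg_le_one {α : ℝ} (hα : 0 ≤ α) : Real.exp (-α) ≤ 1 :=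
  Real.exp_le_one_iff.mpr (by linarith)

lemma g_nonneg {α : ℝ} (hα : 0 < α) : 0 ≤ g α := by
  rw [g_id hα]
  apply div_nonneg _ (by positivity)
  have h1 := exp_neg_le_one (le_of_lt hα)
  have h2 := key_ineq (le_of_lt hα)
  nlinarith

lemma g_le_one {α : ℝ} (hα : 0 < α) : g α ≤ 1 := by
  have h1 : (1 - Real.exp (-2 * α)) / (2 * α) ≤ 1 := by
    rw [div_le_one (by linarith)]
    nlinarith [Real.add_one_le_exp (-2 * α)]
  have h2 : 0 ≤ ((1 - Real.exp (-α)) / α) ^ 2 := sq_nonneg _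
  unfold g; linarith

lemma g_lower {α : ℝ} (hα : 4 ≤ α) : 1 / (5 * α) ≤ g α := by
  have hα0 : (0:ℝ) < α := by linarith
  have hu1 : Real.exp (-α) ≤ 1 / 16 := by
    have h1 : (2:ℝ) ≤ Real.exp 1 := by nlinarith [Real.add_one_le_exp 1]
    have h4 : (16:ℝ) ≤ Real.exp 4 := by
      rw [show (4:ℝ) = 1 + 1 + 1 + 1 by norm_num, Real.exp_add, Real.exp_add, Real.exp_add]
      nlinarith [Real.exp_pos 1, sq_nonneg (Real.exp 1 * Real.exp 1 - 4), sq_nonneg (Real.exp 1 - 2)]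
    have hle : Real.exp (-α) ≤ Real.exp (-4) := Real.exp_le_exp.mpr (by linarith)
    have h2 : Real.exp (-4:ℝ) ≤ 1 / 16 := by
      rw [Real.exp_neg, show (1:ℝ)/16 = (16:ℝ)⁻¹ by norm_num]
      exact inv_anti₀ (by norm_num) h4
    linarith
  have hu0 : 0 < Real.exp (-α) := Real.exp_pos _
  rw [g_id hα0, div_le_div_iff₀ (by linarith) (by positivity)]
  nlinarith [sq_nonneg (Real.exp (-α)), mul_nonneg (le_of_lt hα0) (le_of_lt hu0),
    mul_le_mul_of_nonneg_left hu1 (le_of_lt hα0), sq_nonneg (1 - Real.exp (-α)), sq_nonneg (α - 4)]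

lemma log_one_add_ge {x : ℝ} (hx0 : 0 ≤ x) (hx1 : x ≤ 1) : x / 2 ≤ Real.log (1 + x) := by
  have h1 : (0:ℝ) < 1 + x := by linarith
  have h := Real.log_le_sub_one_of_pos (show (0:ℝ) < (1+x)⁻¹ by positivity)
  rw [Real.log_inv] at h
  have h2 : 1 - (1+x)⁻¹ ≤ Real.log (1 + x) := by linarith
  have h3 : x / 2 ≤ 1 - (1+x)⁻¹ := by
    have he : 1 - (1+x)⁻¹ = x / (1+x) := by field_simp; ring
    rw [he, le_div_iff₀ h1]
    nlinarith
  linarith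

/-- Combinatorial-effects scenario (Case 3, `M/N = C`):
`G(N) = 2 − C·N²·ln(1 + b·g(a·N))` is continuous on `(0,∞)`, tends to `2` as `N → 0⁺`,
tends to `−∞` as `N → +∞`, and consequently has a positive zero `N_crit`. -/
theorem combinatorial_effects_crossover (C a b : ℝ) (hC : 0 < C) (ha : 0 < a) (hb : 0 < b)
    (G : ℝ → ℝ) (hG : ∀ N : ℝ, G N = 2 - C * N ^ 2 * Real.log (1 + b * g (a * N))) :
    ContinuousOn G (Set.Ioi (0 : ℝ)) ∧
    Tendsto G (nhdsWithin 0 (Set.Ioi 0)) (nhds 2) ∧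
    Tendsto G atTop atBot ∧
    ∃ Ncrit : ℝ, 0 < Ncrit ∧ G Ncrit = 0 := by
  have hGfun : G = fun N => 2 - C * N ^ 2 * Real.log (1 + b * g (a * N)) := funext hG
  -- basic bounds on the log term for N > 0
  have hlog_bounds : ∀ N : ℝ, 0 < N →
      0 ≤ Real.log (1 + b * g (a * N)) ∧ Real.log (1 + b * g (a * N)) ≤ Real.log (1 + b) := by
    intro N hN
    have haN : 0 < a * N := by positivity
    have h0 := g_nonneg haN
    have h1 := g_le_one haN
    constructor
    · apply Real.log_nonneg; nlinarith
    · apply Real.log_le_log (by nlinarith); nlinarith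
  -- Part 1: continuity
  have hcont : ContinuousOn G (Set.Ioi (0 : ℝ)) := by
    rw [hGfun]
    apply ContinuousOn.sub continuousOn_const
    apply ContinuousOn.mul
    · exact (continuous_const.mul (continuous_pow 2)).continuousOn
    · apply ContinuousOn.log
      · apply ContinuousOn.add continuousOn_const
        apply ContinuousOn.mul continuousOn_const
        have hgc : ContinuousOn g (Set.Ioi (0:ℝ)) := by
          unfold g
          apply ContinuousOn.sub
          · exact ContinuousOn.div
              (continuous_const.sub (Real.continuous_exp.comp (continuous_const.mul continuous_id))).continuousOn
              (continuous_const.mul continuous_id).continuousOn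
              (fun x hx => by have : (0:ℝ) < x := hx; positivity)
          · exact ContinuousOn.pow (ContinuousOn.div
              (continuous_const.sub (Real.continuous_exp.comp continuous_neg)).continuousOn
              continuous_id.continuousOn
              (fun x hx => by have : (0:ℝ) < x := hx; positivity)) 2
        exact hgc.comp (continuous_const.mul continuous_id).continuousOn
          (fun N hN => by have : (0:ℝ) < N := hN; simp [Set.mem_Ioi]; positivity)
      · intro N hN
        have hN0 : (0:ℝ) < N := hN
        have := g_nonneg (show 0 < a * N by positivity)
        nlinarith
  -- Part 2: limit at 0+
  have htend0 : Tendsto G (nhdsWithin 0 (Set.Ioi 0)) (nhds 2) := by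
    have hlow : Tendsto (fun N : ℝ => 2 - C * N ^ 2 * Real.log (1 + b)) (nhdsWithin 0 (Set.Ioi 0)) (nhds 2) := by
      have hc : Continuous (fun N : ℝ => 2 - C * N ^ 2 * Real.log (1 + b)) := by continuity
      have := hc.tendsto 0
      simp at this
      exact this.mono_left nhdsWithin_le_nhds
    apply tendsto_of_tendsto_of_tendsto_of_le_of_le' hlow tendsto_const_nhds
    · filter_upwards [self_mem_nhdsWithin] with N hN
      have hN0 : (0:ℝ) < N := hN
      have h := (hlog_bounds N hN0).2
      rw [hG N]
      have : 0 ≤ C * N ^ 2 := by positivity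
      nlinarith
    · filter_upwards [self_mem_nhdsWithin] with N hN
      have hN0 : (0:ℝ) < N := hN
      have h := (hlog_bounds N hN0).1
      rw [hG N]
      have : 0 ≤ C * N ^ 2 := by positivity
      nlinarith
  -- Part 3: limit at infinity
  have htendtop : Tendsto G atTop atBot := by
    set k := C * b / (10 * a) with hk
    have hkpos : 0 < k := by positivity
    have hupper : ∀ᶠ N : ℝ in atTop, G N ≤ 2 - k * N := by
      filter_upwards [eventually_ge_atTop (max (4 / a) (b / (5 * a))), eventually_ge_atTop 1] with N hN hN1
      have hN0 : (0:ℝ) < N := by linarith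
      have haN4 : 4 ≤ a * N := by
        have := le_trans (le_max_left (4/a) (b/(5*a))) hN
        rw [div_le_iff₀ ha] at this; linarith
      have haN0 : 0 < a * N := by linarith
      have hx1 : b / (5 * (a * N)) ≤ 1 := by
        have := le_trans (le_max_right (4/a) (b/(5*a))) hN
        rw [div_le_iff₀ (by positivity : (0:ℝ) < 5 * a)] at this
        rw [div_le_one (by positivity)]
        linarith
      have hx0 : 0 ≤ b / (5 * (a * N)) := by positivity
      have hglow := g_lower haN4
      have hmono : Real.log (1 + b / (5 * (a * N))) ≤ Real.log (1 + b * g (a * N)) := by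
        apply Real.log_le_log (by linarith)
        have : b / (5 * (a * N)) ≤ b * g (a * N) := by
          rw [div_le_iff₀ (by positivity : (0:ℝ) < 5 * (a * N))]
          have h2 : b * (1 / (5 * (a * N))) ≤ b * g (a * N) :=
            mul_le_mul_of_nonneg_left hglow (le_of_lt hb)
          calc b = b * (1 / (5 * (a * N))) * (5 * (a * N)) := by field_simp
            _ ≤ b * g (a * N) * (5 * (a * N)) := by
                apply mul_le_mul_of_nonneg_right h2 (by positivity)
        linarith
      have hlast := log_one_add_ge hx0 hx1
      have hlog_lb : b / (10 * (a * N)) ≤ Real.log (1 + b * g (a * N)) := by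
        have : b / (5 * (a * N)) / 2 = b / (10 * (a * N)) := by ring
        linarith [this ▸ hlast]
      rw [hG N]
      have hstep : C * N ^ 2 * (b / (10 * (a * N))) ≤ C * N ^ 2 * Real.log (1 + b * g (a * N)) :=
        mul_le_mul_of_nonneg_left hlog_lb (by positivity)
      have hval : C * N ^ 2 * (b / (10 * (a * N))) = k * N := by
        rw [hk]; field_simp
      linarith [hval ▸ hstep]
    have hlin : Tendsto (fun N : ℝ => 2 - k * N) atTop atBot := by
      have h1 : Tendsto (fun N : ℝ => k * N) atTop atTop :=
        Tendsto.const_mul_atTop hkpos tendsto_id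
      have h2 : Tendsto (fun N : ℝ => -(k * N)) atTop atBot := tendsto_neg_atTop_atBot.comp h1
      have := tendsto_atBot_add_const_left atTop 2 h2
      simpa [sub_eq_add_neg] using this
    exact tendsto_atBot_mono' atTop hupper hlin
  -- Part 4: existence of a zero
  refine ⟨hcont, htend0, htendtop, ?_⟩
  have hεe : ∃ ε : ℝ, ε ∈ Set.Ioi (0:ℝ) ∧ 1 < G ε := by
    have h1 : ∀ᶠ N in nhdsWithin 0 (Set.Ioi (0:ℝ)), 1 < G N :=
      htend0.eventually (eventually_gt_nhds (by norm_num))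
    exact (eventually_mem_nhdsWithin.and h1).exists
  obtain ⟨ε, hε0, hGε⟩ := hεe
  have hMe : ∃ M : ℝ, G M < 0 ∧ ε < M :=
    ((htendtop.eventually (eventually_lt_atBot 0)).and (eventually_gt_atTop ε)).exists
  obtain ⟨M, hGM, hεM⟩ := hMe
  have hsub : Set.Icc ε M ⊆ Set.Ioi (0:ℝ) := fun x hx => lt_of_lt_of_le hε0 hx.1
  have hivt := intermediate_value_Icc' (le_of_lt hεM) (hcont.mono hsub)
  have h0mem : (0:ℝ) ∈ Set.Icc (G M) (G ε) := ⟨le_of_lt hGM, by linarith⟩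
  obtain ⟨N, hNmem, hGN⟩ := hivt h0mem
  exact ⟨N, lt_of_lt_of_le hε0 hNmem.1, hGN⟩
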